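/- Let G be a finite simple graph with at least one edge. Then there exists n_0 such that for all n ≥ n_0, the family F_{n,G} = {X ⊆ [n] : |X| > emb(n,G)} is G-free; consequently, for all n ≥ n_0, 2^n - vex(n,G) ≤ Σ_{i=0}^{emb(n,G)} C(n,i). -/

import Mathlib

open Finset

/-- The Kneser cube: the simple graph on all subsets of `[n]`, with two distinct
sets adjacent iff they are disjoint. -/
def kneserCube (n : ℕ) : SimpleGraph (Finset (Fin n)) where
  Adj A B := A ≠ B ∧ Disjoint A B
  symm := ⟨fun _ _ h => ⟨h.1.symm, h.2.symm⟩⟩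
  loopless := ⟨fun _ h => h.1 rfl⟩

/-- The Kneser graph `Kn(n, m)`: the simple graph on all `m`-element subsets of `[n]`,
with two distinct sets adjacent iff they are disjoint. -/
def kneserGraph (n m : ℕ) : SimpleGraph {A : Finset (Fin n) // A.card = m} where
  Adj A B := A ≠ B ∧ Disjoint A.1 B.1
  symm := ⟨fun _ _ h => ⟨h.1.symm, h.2.symm⟩⟩
  loopless := ⟨fun _ h => h.1 rfl⟩

/-- `H` contains a subgraph isomorphic to `G`, i.e. there is an injective graph
homomorphism from `G` into `H`. -/
def hasCopy {V W : Type*} (G : SimpleGraph V) (H : SimpleGraph W) : Prop :=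
  ∃ f : V → W, Function.Injective f ∧ ∀ a b, G.Adj a b → H.Adj (f a) (f b)

/-- A family `F` of subsets of `[n]` is `G`-free if the subgraph of the Kneser cube
induced on `F` contains no subgraph isomorphic to `G`. -/
def gFree {V : Type*} (G : SimpleGraph V) (n : ℕ) (F : Finset (Finset (Fin n))) : Prop :=
  ¬ ∃ f : V → Finset (Fin n),
      Function.Injective f ∧ (∀ v, f v ∈ F) ∧
        ∀ a b, G.Adj a b → (kneserCube n).Adj (f a) (f b)

/-- `vexG n G` : the maximum size of a `G`-free family of subsets of `[n]`. -/
noncomputable def vexG {V : Type*} (n : ℕ) (G : SimpleGraph V) : ℕ :=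
  sSup {k | ∃ F : Finset (Finset (Fin n)), gFree G n F ∧ F.card = k}

/-- `emb n G` : the maximum `m` such that the Kneser graph `Kn(n, m)` contains a
subgraph isomorphic to `G`. -/
noncomputable def emb {V : Type*} (n : ℕ) (G : SimpleGraph V) : ℕ :=
  sSup {m | hasCopy G (kneserGraph n m)}

/-- Any `m` with a copy of a graph-with-an-edge in `Kn(n,m)` satisfies `m ≤ n`. -/
lemma copy_le {V : Type*} (G : SimpleGraph V) (hedge : ∃ a b, G.Adj a b)
    {n m : ℕ} (h : hasCopy G (kneserGraph n m)) : m ≤ n := by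
  obtain ⟨f, _, hadj⟩ := h
  obtain ⟨a, b, hab⟩ := hedge
  have := (f a).2
  calc m = (f a).1.card := this.symm
    _ ≤ Fintype.card (Fin n) := Finset.card_le_univ _ |>.trans (by simp [Finset.card_univ])
    _ = n := Fintype.card_fin n

lemma bddAbove_copy {V : Type*} (G : SimpleGraph V) (hedge : ∃ a b, G.Adj a b) (n : ℕ) :
    BddAbove {m | hasCopy G (kneserGraph n m)} :=
  ⟨n, fun _ hm => copy_le G hedge hm⟩

/-- For `n ≥ c²` with `c = card V`, `Kn(n, c)` contains a copy of any graph on `V`. -/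
lemma copy_at_card {V : Type*} [Fintype V] (G : SimpleGraph V) (hedge : ∃ a b, G.Adj a b)
    (n : ℕ) (hn : Fintype.card V * Fintype.card V ≤ n) :
    hasCopy G (kneserGraph n (Fintype.card V)) := by
  classical
  set c := Fintype.card V with hc
  obtain ⟨a₀, b₀, hab₀⟩ := hedge
  have hc1 : 1 ≤ c := Fintype.card_pos_iff.mpr ⟨a₀⟩
  let e := Fintype.equivFin V
  have hlt : ∀ v : V, ∀ x ∈ Finset.Ico (c * (e v : ℕ)) (c * (e v : ℕ) + c), x < n := by
    intro v x hx
    rw [Finset.mem_Ico] at hx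
    have hev : (e v : ℕ) + 1 ≤ c := (e v).2
    have := Nat.mul_le_mul_left c hev
    rw [Nat.mul_add, Nat.mul_one] at this
    omega
  let S : V → Finset (Fin n) := fun v => (Finset.Ico (c * (e v : ℕ)) (c * (e v : ℕ) + c)).attachFin (hlt v)
  have hcard : ∀ v, (S v).card = c := by
    intro v
    rw [Finset.card_attachFin, Nat.card_Ico]
    omega
  have hdisj : ∀ v w : V, v ≠ w → Disjoint (S v) (S w) := by
    intro v w hvw
    rw [Finset.disjoint_left]
    intro x hxv hxw
    rw [Finset.mem_attachFin, Finset.mem_Ico] at hxv hxw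
    have hev : (e v : ℕ) ≠ (e w : ℕ) := by
      intro h
      exact hvw (e.injective (Fin.ext h))
    rcases Nat.lt_or_ge (e v : ℕ) (e w : ℕ) with h | h
    · have : c * ((e v : ℕ) + 1) ≤ c * (e w : ℕ) := Nat.mul_le_mul_left c h
      rw [Nat.mul_add, Nat.mul_one] at this; omega
    · have h' : (e w : ℕ) < (e v : ℕ) := lt_of_le_of_ne h (Ne.symm hev)
      have : c * ((e w : ℕ) + 1) ≤ c * (e v : ℕ) := Nat.mul_le_mul_left c h'
      rw [Nat.mul_add, Nat.mul_one] at this; omega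
  have hSinj : Function.Injective S := by
    intro v w hvw
    by_contra hne
    have hd := hdisj v w hne
    rw [hvw, disjoint_self] at hd
    have hcw := hcard w
    rw [hd] at hcw
    simp at hcw
    omega
  refine ⟨fun v => ⟨S v, hcard v⟩, ?_, ?_⟩
  · intro v w h
    exact hSinj (congrArg Subtype.val h)
  · intro a b hab
    exact ⟨fun h => (G.ne_of_adj hab) (hSinj (congrArg Subtype.val h)),
      hdisj a b (G.ne_of_adj hab)⟩

theorem stmt17 {V : Type*} [Fintype V] (G : SimpleGraph V)
    (hedge : ∃ a b, G.Adj a b) :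
    ∃ n₀ : ℕ, ∀ n : ℕ, n₀ ≤ n →
      gFree G n (univ.filter fun X : Finset (Fin n) => emb n G < X.card) ∧
        2 ^ n - vexG n G ≤ ∑ i ∈ Finset.range (emb n G + 1), n.choose i := by
  classical
  set c := Fintype.card V with hc
  refine ⟨c * c, fun n hn => ?_⟩
  set m := emb n G with hm
  have hbdd := bddAbove_copy G hedge n
  have hcm : c ≤ m := le_csSup hbdd (copy_at_card G hedge n hn)
  -- Part 1: G-freeness
  have hfree : gFree G n (univ.filter fun X : Finset (Fin n) => m < X.card) := by
    rintro ⟨f, finj, fmem, fadj⟩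
    have fcard : ∀ v, m + 1 ≤ (f v).card := by
      intro v
      have := fmem v
      rw [Finset.mem_filter] at this
      omega
    -- Hall's condition for choosing (m+1)-subsets injectively
    have hall : ∀ s : Finset V, s.card ≤ (s.biUnion fun v => (f v).powersetCard (m + 1)).card := by
      intro s
      rcases s.eq_empty_or_nonempty with rfl | hs
      · simp
      obtain ⟨v₀, hv₀s, hv₀⟩ := Finset.exists_max_image s (fun v => (f v).card) hs
      rcases Nat.lt_or_ge (m + 1) (f v₀).card with hbig | hsmall
      · -- some set is large: its powersetCard alone is big enough
        have hsub : (f v₀).powersetCard (m + 1) ⊆ s.biUnion fun v => (f v).powersetCard (m + 1) :=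
          Finset.subset_biUnion_of_mem (fun v => (f v).powersetCard (m + 1)) hv₀s
        have h1 : (f v₀).card.choose (m + 1) ≤ (s.biUnion fun v => (f v).powersetCard (m + 1)).card := by
          rw [← Finset.card_powersetCard]
          exact Finset.card_le_card hsub
        have h2 : m + 2 ≤ (f v₀).card.choose (m + 1) := by
          calc m + 2 = (m + 2).choose (m + 1) := (Nat.choose_succ_self_right (m + 1)).symm
            _ ≤ (f v₀).card.choose (m + 1) := Nat.choose_mono _ hbig
        have h3 : s.card ≤ c := by
          calc s.card ≤ Fintype.card V := Finset.card_le_univ s |>.trans (by simp [Finset.card_univ])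
            _ = c := rfl
        omega
      · -- all sets in s have size exactly m+1
        have hex : ∀ v ∈ s, (f v).card = m + 1 := by
          intro v hv
          have h1 := fcard v
          have h2 := (hv₀ v hv).trans hsmall
          omega
        have : s.image f ⊆ s.biUnion fun v => (f v).powersetCard (m + 1) := by
          intro X hX
          rw [Finset.mem_image] at hX
          obtain ⟨v, hv, rfl⟩ := hX
          refine Finset.mem_biUnion.mpr ⟨v, hv, ?_⟩
          rw [Finset.mem_powersetCard]
          exact ⟨le_refl _, hex v hv⟩
        calc s.card = (s.image f).card := (Finset.card_image_of_injective s finj).symm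
          _ ≤ _ := Finset.card_le_card this
    obtain ⟨g, ginj, hg⟩ := (Finset.all_card_le_biUnion_card_iff_exists_injective
      (fun v => (f v).powersetCard (m + 1))).mp hall
    have hgmem : ∀ v, g v ⊆ f v ∧ (g v).card = m + 1 := by
      intro v
      have := hg v
      rwa [Finset.mem_powersetCard] at this
    have hcopy : hasCopy G (kneserGraph n (m + 1)) := by
      refine ⟨fun v => ⟨g v, (hgmem v).2⟩, ?_, ?_⟩
      · intro v w h
        exact ginj (congrArg Subtype.val h)
      · intro a b hab
        have hD : Disjoint (f a) (f b) := (fadj a b hab).2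
        refine ⟨fun h => (G.ne_of_adj hab) (ginj (congrArg Subtype.val h)), ?_⟩
        exact hD.mono (hgmem a).1 (hgmem b).1
    have : m + 1 ≤ m := le_csSup hbdd hcopy
    omega
  refine ⟨hfree, ?_⟩
  -- Part 2: the counting consequence
  set F := univ.filter fun X : Finset (Fin n) => m < X.card with hF
  have hvex : F.card ≤ vexG n G := by
    apply le_csSup
    · refine ⟨2 ^ n, fun k hk => ?_⟩
      obtain ⟨F', _, rfl⟩ := hk
      calc F'.card ≤ Fintype.card (Finset (Fin n)) := Finset.card_le_univ F' |>.trans (by simp [Finset.card_univ])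
        _ = 2 ^ n := by rw [Fintype.card_finset, Fintype.card_fin]
    · exact ⟨F, hfree, rfl⟩
  have hcount : (univ.filter fun X : Finset (Fin n) => ¬ m < X.card).card
      = ∑ i ∈ Finset.range (m + 1), n.choose i := by
    have heq : (univ.filter fun X : Finset (Fin n) => ¬ m < X.card)
        = (Finset.range (m + 1)).biUnion fun i => Finset.powersetCard i univ := by
      ext X
      simp only [Finset.mem_filter, Finset.mem_univ, true_and, Finset.mem_biUnion,
        Finset.mem_range, Finset.mem_powersetCard, Nat.lt_succ_iff, not_lt]
      constructor
      · intro h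
        exact ⟨X.card, h, Finset.subset_univ X, rfl⟩
      · rintro ⟨i, hi, -, rfl⟩
        exact hi
    rw [heq, Finset.card_biUnion]
    · apply Finset.sum_congr rfl
      intro i _
      rw [Finset.card_powersetCard, Finset.card_univ, Fintype.card_fin]
    · intro i _ j _ hij
      rw [Function.onFun, Finset.disjoint_left]
      intro X hX hX'
      rw [Finset.mem_powersetCard] at hX hX'
      exact hij (hX.2.symm.trans hX'.2)
  have htotal : F.card + (univ.filter fun X : Finset (Fin n) => ¬ m < X.card).card
      = 2 ^ n := by
    rw [hF, Finset.card_filter_add_card_filter_not, Finset.card_univ,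
      Fintype.card_finset, Fintype.card_fin]
  omega
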